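/- In the universal enveloping algebra H = U(gl_2 ⋉ (k^2 ⊕ (k^2)*)), the element d = τ(y_1 x - x_1 y) - (2 e y_1 y + h(y_1 x + x_1 y) - 2 f x_1 x) is central. -/

import Mathlib

set_option maxHeartbeats 1000000

theorem stmt3 {k : Type} [Field k] [CharZero k] {A : Type} [Ring A] [Algebra k A]
    (ee ff hh tt xx yy x1 y1 : A)
    (hHE : ⁅hh, ee⁆ = 2*ee) (hHF : ⁅hh, ff⁆ = -(2*ff)) (hEF : ⁅ee, ff⁆ = hh)
    (hTE : ⁅tt, ee⁆ = 0) (hTF : ⁅tt, ff⁆ = 0) (hTH : ⁅tt, hh⁆ = 0)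
    (hEX : ⁅ee, xx⁆ = 0) (hEY : ⁅ee, yy⁆ = xx)
    (hFX : ⁅ff, xx⁆ = yy) (hFY : ⁅ff, yy⁆ = 0)
    (hHX : ⁅hh, xx⁆ = xx) (hHY : ⁅hh, yy⁆ = -yy)
    (hTX : ⁅tt, xx⁆ = xx) (hTY : ⁅tt, yy⁆ = yy)
    (hEX1 : ⁅ee, x1⁆ = 0) (hEY1 : ⁅ee, y1⁆ = x1)
    (hFX1 : ⁅ff, x1⁆ = y1) (hFY1 : ⁅ff, y1⁆ = 0)
    (hHX1 : ⁅hh, x1⁆ = x1) (hHY1 : ⁅hh, y1⁆ = -y1)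
    (hTX1 : ⁅tt, x1⁆ = -x1) (hTY1 : ⁅tt, y1⁆ = -y1)
    (hXY : ⁅xx, yy⁆ = 0) (hXX1 : ⁅xx, x1⁆ = 0) (hXY1 : ⁅xx, y1⁆ = 0)
    (hYX1 : ⁅yy, x1⁆ = 0) (hYY1 : ⁅yy, y1⁆ = 0) (hX1Y1 : ⁅x1, y1⁆ = 0)
    (hgen : Algebra.adjoin k ({ee, ff, hh, tt, xx, yy, x1, y1} : Set A) = ⊤)
    (hPBW : LinearIndependent k (fun m : Fin 8 → ℕ =>
      ee ^ m 0 * ff ^ m 1 * hh ^ m 2 * tt ^ m 3 * xx ^ m 4 * yy ^ m 5 * x1 ^ m 6 * y1 ^ m 7))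
    :
    (tt*(y1*xx - x1*yy) - (2*ee*(y1*yy) + hh*(y1*xx + x1*yy) - 2*ff*(x1*xx))) ∈ Subalgebra.center k A := by
  letI : LieRing A := LieRing.ofAssociativeRing
  -- bracket expansion lemmas
  have lmul : ∀ a b c : A, ⁅a, b*c⁆ = ⁅a,b⁆*c + b*⁅a,c⁆ := by
    intro a b c; simp only [Ring.lie_def]; noncomm_ring
  have l2 : ∀ a : A, ⁅a, (2:A)⁆ = 0 := by
    intro a; simp only [Ring.lie_def, mul_two, two_mul]; abel
  -- reversed bracket facts
  have hEH : ⁅ee, hh⁆ = -(2*ee) := by rw [← lie_skew (x := ee) (y := hh), hHE]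
  have hFH : ⁅ff, hh⁆ = 2*ff := by rw [← lie_skew (x := ff) (y := hh), hHF]; noncomm_ring
  have hFE : ⁅ff, ee⁆ = -hh := by rw [← lie_skew (x := ff) (y := ee), hEF]
  have hET : ⁅ee, tt⁆ = 0 := by rw [← lie_skew (x := ee) (y := tt), hTE]; simp
  have hFT : ⁅ff, tt⁆ = 0 := by rw [← lie_skew (x := ff) (y := tt), hTF]; simp
  have hHT : ⁅hh, tt⁆ = 0 := by rw [← lie_skew (x := hh) (y := tt), hTH]; simp
  have hXE : ⁅xx, ee⁆ = 0 := by rw [← lie_skew (x := xx) (y := ee), hEX]; simp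
  have hYE : ⁅yy, ee⁆ = -xx := by rw [← lie_skew (x := yy) (y := ee), hEY]
  have hXF : ⁅xx, ff⁆ = -yy := by rw [← lie_skew (x := xx) (y := ff), hFX]
  have hYF : ⁅yy, ff⁆ = 0 := by rw [← lie_skew (x := yy) (y := ff), hFY]; simp
  have hXH : ⁅xx, hh⁆ = -xx := by rw [← lie_skew (x := xx) (y := hh), hHX]
  have hYH : ⁅yy, hh⁆ = yy := by rw [← lie_skew (x := yy) (y := hh), hHY]; simp
  have hXT : ⁅xx, tt⁆ = -xx := by rw [← lie_skew (x := xx) (y := tt), hTX]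
  have hYT : ⁅yy, tt⁆ = -yy := by rw [← lie_skew (x := yy) (y := tt), hTY]
  have hX1E : ⁅x1, ee⁆ = 0 := by rw [← lie_skew (x := x1) (y := ee), hEX1]; simp
  have hY1E : ⁅y1, ee⁆ = -x1 := by rw [← lie_skew (x := y1) (y := ee), hEY1]
  have hX1F : ⁅x1, ff⁆ = -y1 := by rw [← lie_skew (x := x1) (y := ff), hFX1]
  have hY1F : ⁅y1, ff⁆ = 0 := by rw [← lie_skew (x := y1) (y := ff), hFY1]; simp
  have hX1H : ⁅x1, hh⁆ = -x1 := by rw [← lie_skew (x := x1) (y := hh), hHX1]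
  have hY1H : ⁅y1, hh⁆ = y1 := by rw [← lie_skew (x := y1) (y := hh), hHY1]; simp
  have hX1T : ⁅x1, tt⁆ = x1 := by rw [← lie_skew (x := x1) (y := tt), hTX1]; simp
  have hY1T : ⁅y1, tt⁆ = y1 := by rw [← lie_skew (x := y1) (y := tt), hTY1]; simp
  have hYX : ⁅yy, xx⁆ = 0 := by rw [← lie_skew (x := yy) (y := xx), hXY]; simp
  have hX1X : ⁅x1, xx⁆ = 0 := by rw [← lie_skew (x := x1) (y := xx), hXX1]; simp
  have hY1X : ⁅y1, xx⁆ = 0 := by rw [← lie_skew (x := y1) (y := xx), hXY1]; simp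
  have hX1Y : ⁅x1, yy⁆ = 0 := by rw [← lie_skew (x := x1) (y := yy), hYX1]; simp
  have hY1Y : ⁅y1, yy⁆ = 0 := by rw [← lie_skew (x := y1) (y := yy), hYY1]; simp
  have hY1X1 : ⁅y1, x1⁆ = 0 := by rw [← lie_skew (x := y1) (y := x1), hX1Y1]; simp
  -- commuting swaps (normal order: x1 < y1 < xx < yy)
  have s1 : y1*x1 = x1*y1 := by have := hX1Y1; rw [Ring.lie_def, sub_eq_zero] at this; exact this.symm
  have s2 : xx*x1 = x1*xx := by have := hXX1; rw [Ring.lie_def, sub_eq_zero] at this; exact this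
  have s3 : xx*y1 = y1*xx := by have := hXY1; rw [Ring.lie_def, sub_eq_zero] at this; exact this
  have s4 : yy*x1 = x1*yy := by have := hYX1; rw [Ring.lie_def, sub_eq_zero] at this; exact this
  have s5 : yy*y1 = y1*yy := by have := hYY1; rw [Ring.lie_def, sub_eq_zero] at this; exact this
  have s6 : yy*xx = xx*yy := by have := hXY; rw [Ring.lie_def, sub_eq_zero] at this; exact this.symm
  have t1 : ∀ c : A, y1*(x1*c) = x1*(y1*c) := fun c => by rw [← mul_assoc, s1, mul_assoc]
  have t2 : ∀ c : A, xx*(x1*c) = x1*(xx*c) := fun c => by rw [← mul_assoc, s2, mul_assoc]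
  have t3 : ∀ c : A, xx*(y1*c) = y1*(xx*c) := fun c => by rw [← mul_assoc, s3, mul_assoc]
  have t4 : ∀ c : A, yy*(x1*c) = x1*(yy*c) := fun c => by rw [← mul_assoc, s4, mul_assoc]
  have t5 : ∀ c : A, yy*(y1*c) = y1*(yy*c) := fun c => by rw [← mul_assoc, s5, mul_assoc]
  have t6 : ∀ c : A, yy*(xx*c) = xx*(yy*c) := fun c => by rw [← mul_assoc, s6, mul_assoc]
  set d := (tt*(y1*xx - x1*yy) - (2*ee*(y1*yy) + hh*(y1*xx + x1*yy) - 2*ff*(x1*xx))) with hd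
  have key : ∀ g ∈ ({ee, ff, hh, tt, xx, yy, x1, y1} : Set A), g * d = d * g := by
    intro g hg
    have expand : ∀ (hE : ⁅g,ee⁆ = 0 ∨ True), True := fun _ => trivial
    rw [← sub_eq_zero, ← Ring.lie_def]
    rw [hd]
    simp only [Set.mem_insert_iff, Set.mem_singleton_iff] at hg
    rcases hg with rfl|rfl|rfl|rfl|rfl|rfl|rfl|rfl <;>
      simp only [lie_sub, lie_add, lmul, hHE, hHF, hEF, hTE, hTF, hTH, hEX, hEY, hFX, hFY,
        hHX, hHY, hTX, hTY, hEX1, hEY1, hFX1, hFY1, hHX1, hHY1, hTX1, hTY1, hXY, hXX1, hXY1,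
        hYX1, hYY1, hX1Y1, hEH, hFH, hFE, hET, hFT, hHT, hXE, hYE, hXF, hYF, hXH, hYH, hXT,
        hYT, hX1E, hY1E, hX1F, hY1F, hX1H, hY1H, hX1T, hY1T, hYX, hX1X, hY1X, hX1Y, hY1Y,
        hY1X1, l2, lie_self, lie_zero, zero_lie, mul_zero, zero_mul, add_zero, zero_add, mul_one,
        one_mul, zero_sub, sub_zero, mul_neg, neg_mul, neg_neg, neg_zero] <;>
      (try noncomm_ring) <;> (simp only [mul_assoc, s1, s2, s3, s4, s5, s6, t1, t2, t3, t4, t5, t6]; abel)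
  rw [Subalgebra.mem_center_iff]
  intro b
  have hb : b ∈ Algebra.adjoin k ({ee, ff, hh, tt, xx, yy, x1, y1} : Set A) := by
    rw [hgen]; trivial
  induction hb using Algebra.adjoin_induction with
  | mem a ha => exact (key a ha).symm.symm ▸ (key a ha)
  | algebraMap r => exact (Algebra.commutes r d).symm ▸ rfl
  | add a b' _ _ ha hb' => rw [add_mul, mul_add, ha, hb']
  | mul a b' _ _ ha hb' => rw [mul_assoc, hb', ← mul_assoc, ha, mul_assoc]
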